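/- (Chinh–Nam) If R is a unique factorization domain in which every maximal ideal is principal, then R is a principal ideal domain. -/

import Mathlib

/-- **Chinh–Nam.** If `R` is a unique factorization domain in which every
maximal ideal is principal, then `R` is a principal ideal domain. -/
theorem ufd_mip_isPrincipalIdealRing (R : Type*) [CommRing R] [IsDomain R]
    [UniqueFactorizationMonoid R]
    (hMIP : ∀ I : Ideal R, I.IsMaximal → I.IsPrincipal) :
    IsPrincipalIdealRing R := by
  apply IsPrincipalIdealRing.of_prime
  intro P hP
  by_cases hbot : P = ⊥
  · exact ⟨0, by rw [hbot]; exact (Ideal.span_singleton_eq_bot.mpr rfl).symm⟩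
  -- P contains a prime element p
  obtain ⟨p, hpP, hp⟩ := hP.exists_mem_prime_of_ne_bot hbot
  -- P is contained in a maximal ideal M = (m)
  obtain ⟨M, hM, hPM⟩ := Ideal.exists_le_maximal P hP.ne_top
  obtain ⟨m, hm⟩ := hMIP M hM
  -- m divides p, and p is irreducible, so (p) = (m) = M, hence P = M
  have hpM : p ∈ M := hPM hpP
  rw [hm] at hpM
  obtain ⟨c, hc⟩ := Ideal.mem_span_singleton.mp hpM
  have hmu : ¬IsUnit m := by
    intro hu
    exact hM.ne_top (by rw [hm]; exact Ideal.eq_top_of_isUnit_mem _ (Ideal.mem_span_singleton_self m) hu)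
  have hcu : IsUnit c := by
    rcases hp.irreducible.isUnit_or_isUnit hc with h | h
    · exact absurd h hmu
    · exact h
  -- so m = p * c⁻¹ ∈ P, hence span {m} ≤ P ≤ M = span {m}
  have hmP : m ∈ P := by
    obtain ⟨u, hu⟩ := hcu
    have : m = p * ↑u⁻¹ := by
      rw [hc, ← hu]
      rw [mul_assoc, Units.mul_inv, mul_one]
    rw [this]
    exact P.mul_mem_right _ hpP
  have : P = M := le_antisymm hPM (by rw [hm]; exact (Ideal.span_singleton_le_iff_mem P).mpr hmP)
  rw [this]
  exact hMIP M hM
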